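/- The function g(t) = (t/arctan(t) − 1)/t² is strictly decreasing on the interval (0, 1), and satisfies lim_{t→0⁺} g(t) = 1/3 and lim_{t→1⁻} g(t) = 4/π − 1; in particular, 4/π − 1 < g(t) < 1/3 for all t ∈ (0, 1). -/

import Mathlib

open Real Filter Set Topology

lemma my_arctan_pos {t : ℝ} (ht : 0 < t) : 0 < Real.arctan t := by
  have := Real.arctan_strictMono ht
  simpa [Real.arctan_zero] using this

lemma my_arctan_lt_self {t : ℝ} (ht : 0 < t) : Real.arctan t < t := by
  have h : StrictMonoOn (fun x : ℝ => x - Real.arctan x) (Ici 0) := by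
    apply strictMonoOn_of_deriv_pos (convex_Ici 0)
    · exact (continuous_id.sub Real.continuous_arctan).continuousOn
    · intro x hx
      rw [interior_Ici] at hx
      have hd : HasDerivAt (fun x : ℝ => x - Real.arctan x) (1 - 1/(1+x^2)) x :=
        (hasDerivAt_id x).sub (Real.hasDerivAt_arctan x)
      rw [hd.deriv]
      have h1 : (0:ℝ) < 1 + x^2 := by positivity
      rw [sub_pos, div_lt_one h1]
      nlinarith [hx.out]
  have := h (mem_Ici.mpr le_rfl) (mem_Ici.mpr ht.le) ht
  simpa [Real.arctan_zero] using this

lemma psi_hasDeriv (t : ℝ) :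
    HasDerivAt (fun x : ℝ => 3*Real.arctan x*(x^2-1) + 3*x - 4*(x*Real.arctan x^2))
      ((6*t^2 + 2*t*Real.arctan t*(3*t^2-1) - 4*Real.arctan t^2*(1+t^2))/(1+t^2)) t := by
  have hA := Real.hasDerivAt_arctan t
  have h := (((hA.const_mul (3:ℝ)).mul ((hasDerivAt_pow 2 t).sub_const 1)).add
      ((hasDerivAt_id' t).const_mul (3:ℝ))).sub
      (((hasDerivAt_id' t).mul (hA.pow 2)).const_mul (4:ℝ))
  refine h.congr_deriv ?_
  have h1 : (1:ℝ) + t^2 ≠ 0 := by positivity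
  simp only [Pi.pow_apply, Pi.mul_apply, Pi.div_apply]
  field_simp
  ring

lemma N_pos {t : ℝ} (h0 : 0 < t) (h1 : t < 1) :
    0 < (6*t^2 + 2*t*Real.arctan t*(3*t^2-1) - 4*Real.arctan t^2*(1+t^2))/(1+t^2) := by
  apply div_pos _ (by positivity)
  have hA1 : Real.arctan t < t := my_arctan_lt_self h0
  have hA0 : 0 < Real.arctan t := my_arctan_pos h0
  nlinarith [mul_nonneg (mul_nonneg hA0.le (sub_pos.mpr hA1).le) (by positivity : (0:ℝ) ≤ 1+t^2),
    mul_nonneg (mul_nonneg h0.le (sub_pos.mpr hA1).le) (by nlinarith : (0:ℝ) ≤ 3 - t^2),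
    pow_pos h0 4]

lemma psi_pos {t : ℝ} (h : t ∈ Ioo (0:ℝ) 1) :
    0 < 3*Real.arctan t*(t^2-1) + 3*t - 4*(t*Real.arctan t^2) := by
  have mono : StrictMonoOn (fun x : ℝ => 3*Real.arctan x*(x^2-1) + 3*x - 4*(x*Real.arctan x^2))
      (Ico (0:ℝ) 1) := by
    apply strictMonoOn_of_deriv_pos (convex_Ico 0 1)
    · exact Continuous.continuousOn (by continuity)
    · intro x hx
      rw [interior_Ico] at hx
      rw [(psi_hasDeriv x).deriv]
      exact N_pos hx.1 hx.2
  have := mono (left_mem_Ico.mpr one_pos) ⟨h.1.le, h.2⟩ h.1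
  simpa [Real.arctan_zero] using this

lemma F_hasDeriv (t : ℝ) :
    HasDerivAt (fun x : ℝ => x*Real.arctan x*(1+x^2) + x^2 - 2*(Real.arctan x^2*(1+x^2)))
      (3*Real.arctan t*(t^2-1) + 3*t - 4*(t*Real.arctan t^2)) t := by
  have hA := Real.hasDerivAt_arctan t
  have h := ((((hasDerivAt_id' t).mul hA).mul ((hasDerivAt_pow 2 t).const_add 1)).add
      (hasDerivAt_pow 2 t)).sub
      (((hA.pow 2).mul ((hasDerivAt_pow 2 t).const_add 1)).const_mul (2:ℝ))
  refine h.congr_deriv ?_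
  have h1 : (1:ℝ) + t^2 ≠ 0 := by positivity
  simp only [Pi.pow_apply, Pi.mul_apply, Pi.div_apply]
  field_simp
  ring

lemma F_pos {t : ℝ} (h : t ∈ Ioo (0:ℝ) 1) :
    0 < t*Real.arctan t*(1+t^2) + t^2 - 2*(Real.arctan t^2*(1+t^2)) := by
  have mono : StrictMonoOn (fun x : ℝ => x*Real.arctan x*(1+x^2) + x^2 - 2*(Real.arctan x^2*(1+x^2)))
      (Ico (0:ℝ) 1) := by
    apply strictMonoOn_of_deriv_pos (convex_Ico 0 1)
    · exact Continuous.continuousOn (by continuity)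
    · intro x hx
      rw [interior_Ico] at hx
      rw [(F_hasDeriv x).deriv]
      exact psi_pos hx
  have := mono (left_mem_Ico.mpr one_pos) ⟨h.1.le, h.2⟩ h.1
  simpa [Real.arctan_zero] using this

lemma g_hasDeriv {t : ℝ} (h0 : 0 < t) :
    HasDerivAt (fun x : ℝ => (x / Real.arctan x - 1) / x ^ 2)
      (-(t*Real.arctan t*(1+t^2) + t^2 - 2*(Real.arctan t^2*(1+t^2)))
        /(t^3*Real.arctan t^2*(1+t^2))) t := by
  have hA := Real.hasDerivAt_arctan t
  have hAne : Real.arctan t ≠ 0 := (my_arctan_pos h0).ne'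
  have h := (((hasDerivAt_id' t).div hA hAne).sub_const 1).div (hasDerivAt_pow 2 t)
    (pow_ne_zero 2 h0.ne')
  refine h.congr_deriv ?_
  have h1 : (1:ℝ) + t^2 ≠ 0 := by positivity
  simp only [Pi.pow_apply, Pi.mul_apply, Pi.div_apply]
  field_simp
  ring

theorem stmt_16 :
    StrictAntiOn (fun t : ℝ => (t / Real.arctan t - 1) / t ^ 2) (Set.Ioo (0 : ℝ) 1) ∧
      Tendsto (fun t : ℝ => (t / Real.arctan t - 1) / t ^ 2) (nhdsWithin 0 (Set.Ioi 0))
        (nhds (1 / 3)) ∧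
      Tendsto (fun t : ℝ => (t / Real.arctan t - 1) / t ^ 2) (nhdsWithin 1 (Set.Iio 1))
        (nhds (4 / π - 1)) ∧
      ∀ t ∈ Set.Ioo (0 : ℝ) 1,
        4 / π - 1 < (t / Real.arctan t - 1) / t ^ 2 ∧ (t / Real.arctan t - 1) / t ^ 2 < 1 / 3 := by
  set g : ℝ → ℝ := fun t : ℝ => (t / Real.arctan t - 1) / t ^ 2 with hg
  -- strict antitonicity
  have hanti : StrictAntiOn g (Ioo (0:ℝ) 1) := by
    apply strictAntiOn_of_deriv_neg (convex_Ioo 0 1)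
    · apply ContinuousOn.div
      · exact ContinuousOn.sub (ContinuousOn.div continuousOn_id
          Real.continuous_arctan.continuousOn
          (fun x hx => (my_arctan_pos hx.1).ne')) continuousOn_const
      · exact (continuous_pow 2).continuousOn
      · exact fun x hx => pow_ne_zero 2 hx.1.ne'
    · intro x hx
      rw [interior_Ioo] at hx
      rw [(g_hasDeriv hx.1).deriv]
      apply div_neg_of_neg_of_pos
      · exact neg_neg_of_pos (F_pos hx)
      · have hAx := my_arctan_pos hx.1
        apply mul_pos (mul_pos (pow_pos hx.1 3) (pow_pos hAx 2)) (by positivity)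
  -- limit at 0+
  have hlim0 : Tendsto g (𝓝[>] (0:ℝ)) (𝓝 (1/3)) := by
    have h1 : Tendsto (fun t : ℝ => (t - Real.arctan t) / t^3) (𝓝[>] (0:ℝ)) (𝓝 (1/3)) := by
      apply HasDerivAt.lhopital_zero_right_on_Ioo (f' := fun x : ℝ => 1 - 1/(1+x^2))
        (g' := fun x : ℝ => (3:ℕ)*x^2) (b := 1) one_pos
      · exact fun x _ => (hasDerivAt_id x).sub (Real.hasDerivAt_arctan x)
      · intro x _
        have := hasDerivAt_pow 3 x
        norm_num at this ⊢
        exact this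
      · intro x hx
        have : (0:ℝ) < x := hx.1
        positivity
      · have : Tendsto (fun t : ℝ => t - Real.arctan t) (𝓝 0) (𝓝 0) := by
          have := (continuous_id.sub Real.continuous_arctan).tendsto 0
          simp only [Pi.sub_apply, id, Real.arctan_zero, sub_zero] at this
          exact this
        exact this.mono_left nhdsWithin_le_nhds
      · have : Tendsto (fun t : ℝ => t^3) (𝓝 0) (𝓝 0) := by
          have := (continuous_pow 3 (M := ℝ)).tendsto 0
          simpa using this
        exact this.mono_left nhdsWithin_le_nhds
      · have key : Tendsto (fun x : ℝ => 1/(3*(1+x^2))) (𝓝 (0:ℝ)) (𝓝 (1/3)) := by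
          have hc : Continuous (fun x : ℝ => 1/(3*(1+x^2))) := by
            apply Continuous.div continuous_const (by fun_prop)
            intro x; positivity
          convert hc.tendsto 0 using 2
          norm_num
        apply Tendsto.congr' _ (key.mono_left nhdsWithin_le_nhds)
        filter_upwards [self_mem_nhdsWithin] with x hx
        have hx0 : (0:ℝ) < x := hx
        have h1 : (1:ℝ) + x^2 ≠ 0 := by positivity
        field_simp
        ring
    have h2 : Tendsto (fun t : ℝ => t / Real.arctan t) (𝓝[>] (0:ℝ)) (𝓝 1) := by
      have hs := (Real.hasDerivAt_arctan 0)
      rw [hasDerivAt_iff_tendsto_slope] at hs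
      rw [slope_fun_def_field] at hs
      simp only [Real.arctan_zero, sub_zero] at hs
      norm_num at hs
      have hs' : Tendsto (fun t : ℝ => Real.arctan t / t) (𝓝[>] (0:ℝ)) (𝓝 1) :=
        hs.mono_left (nhdsWithin_mono 0 (fun x hx => ne_of_gt hx))
      have := hs'.inv₀ one_ne_zero
      norm_num at this
      exact this
    have := h1.mul h2
    norm_num at this
    apply Tendsto.congr' _ this
    filter_upwards [self_mem_nhdsWithin] with x hx
    have hx0 : (0:ℝ) < x := hx
    have hA : Real.arctan x ≠ 0 := (my_arctan_pos hx0).ne'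
    rw [hg]
    field_simp
  -- limit at 1-
  have hlim1 : Tendsto g (𝓝[<] (1:ℝ)) (𝓝 (4/π - 1)) := by
    have hc : ContinuousAt g 1 := by
      apply ContinuousAt.div
      · apply ContinuousAt.sub _ continuousAt_const
        apply ContinuousAt.div continuousAt_id Real.continuous_arctan.continuousAt
        rw [Real.arctan_one]
        positivity
      · exact (continuous_pow 2).continuousAt
      · norm_num
    have hval : g 1 = 4/π - 1 := by
      rw [hg]
      simp only [Real.arctan_one, one_pow, div_one]
      rw [div_div_eq_mul_div]
      norm_num
    rw [← hval]
    exact hc.continuousWithinAt.tendsto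
  refine ⟨hanti, hlim0, hlim1, ?_⟩
  intro t ht
  constructor
  · -- lower bound
    set m : ℝ := (t+1)/2 with hm
    have hm1 : m < 1 := by rw [hm]; linarith [ht.2]
    have hmt : t < m := by rw [hm]; linarith [ht.2]
    have hm0 : 0 < m := by rw [hm]; linarith [ht.1]
    have hmem : m ∈ Ioo (0:ℝ) 1 := ⟨hm0, hm1⟩
    have hle : 4/π - 1 ≤ g m := by
      apply le_of_tendsto hlim1
      filter_upwards [Ioo_mem_nhdsLT_of_mem (⟨hm1, le_rfl⟩ :
        (1:ℝ) ∈ Ioc m 1)] with s hs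
      exact (hanti hmem ⟨hm0.trans hs.1, hs.2⟩ hs.1).le
    exact lt_of_le_of_lt hle (hanti ht hmem hmt)
  · -- upper bound
    set m : ℝ := t/2 with hm
    have hm0 : 0 < m := by rw [hm]; linarith [ht.1]
    have hmt : m < t := by rw [hm]; linarith [ht.1]
    have hmem : m ∈ Ioo (0:ℝ) 1 := ⟨hm0, hmt.trans ht.2⟩
    have hle : g m ≤ 1/3 := by
      apply ge_of_tendsto hlim0
      filter_upwards [Ioo_mem_nhdsGT_of_mem (⟨le_rfl, hm0⟩ : (0:ℝ) ∈ Ico 0 m)] with s hs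
      exact (hanti ⟨hs.1, hs.2.trans hmem.2⟩ hmem hs.2).le
    exact lt_of_lt_of_le (hanti hmem ht hmt) hle
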